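/- arXiv:1902.06565 — 2 statements merged into one kernel-verified Lean document; each statement's English description precedes it below -/
import Mathlib

section
/- Let S ⊆ ℝ^p be a feasible set, and let d, u ∈ ℝ^p satisfy u_i < d_i for all i. Suppose s* ∈ S is Pareto-nondominated in S and has equal benefit ratios, i.e., there is t ∈ ℝ with r^(i)(s*) = t for every i. Then for every s ∈ S one has min_{1≤i≤p} r^(i)(s) ≤ t; hence s* maximizes min_{1≤i≤p} r^(i)(s) over S (and in particular over the Pareto-nondominated elements of S), so a feasible equal-ratio Pareto-nondominated point is an efficient maxmin (Kalai–Smorodinsky) solution. -/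
/-- A feasible, Pareto-nondominated point with all benefit ratios equal to `t`
is an efficient maxmin (Kalai–Smorodinsky) solution: every `s ∈ S` has minimal
benefit ratio at most `t`. -/
theorem equal_ratio_pareto_point_is_maxmin
    {p : ℕ} [NeZero p] (S : Set (Fin p → ℝ)) (d u : Fin p → ℝ)
    (hdu : ∀ i, u i < d i)
    (sstar : Fin p → ℝ) (hmem : sstar ∈ S)
    (hpareto : ∀ s' ∈ S, ∃ k, sstar k ≤ s' k)
    (t : ℝ) (hratio : ∀ i, (d i - sstar i) / (d i - u i) = t) :
    ∀ s ∈ S,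
      (Finset.univ.inf' Finset.univ_nonempty
        fun i : Fin p => (d i - s i) / (d i - u i)) ≤ t := by
  intro s hs
  obtain ⟨k, hk⟩ := hpareto s hs
  calc Finset.univ.inf' Finset.univ_nonempty
        (fun i : Fin p => (d i - s i) / (d i - u i))
      ≤ (d k - s k) / (d k - u k) := Finset.inf'_le _ (Finset.mem_univ k)
    _ ≤ (d k - sstar k) / (d k - u k) := by
        have hpos : (0:ℝ) < d k - u k := sub_pos.mpr (hdu k)
        exact (div_le_div_iff_of_pos_right hpos).mpr (by linarith)
    _ = t := hratio k
end

section
/- The copula-space (rank-based) benefit ratios on a finite domain are invariant under strictly increasing transformations of the objectives: let x_1, …, x_N be the elements of a finite domain, let y^(1), …, y^(p) be real-valued objective functions on it, and for s ∈ ℝ^p define r_C^(i)(s) = (1/N) · #{ j : s_i ≤ y^(i)(x_j) }. Let g_1, …, g_p : ℝ → ℝ be strictly increasing and let r̃_C^(i) denote the same quantity computed with objectives g_i ∘ y^(i). Then for every s ∈ ℝ^p and every i, r̃_C^(i)(g_1(s_1), …, g_p(s_p)) = r_C^(i)(s). Consequently, the set of points of the finite image set S = { (y^(1)(x_j), …,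 y^(p)(x_j)) : 1 ≤ j ≤ N } that are Pareto-nondominated in S and maximize min_{1≤i≤p} r_C^(i) (the copula Kalai–Smorodinsky solutions) corresponds, under the componentwise map (g_1, …, g_p), exactly to the analogous set for the transformed objectives. -/
/-- Copula-space (rank-based) benefit ratio of `s` in objective `i`, for
objectives `y` on a finite domain of `N` points:
`r_C^(i)(s) = (1/N) · #{ j : s_i ≤ y^(i)(x_j) }`. -/
noncomputable def rCop {p N : ℕ} (y : Fin p → Fin N → ℝ) (s : Fin p → ℝ) (i : Fin p) : ℝ :=
  ((Finset.univ.filter fun j : Fin N => s i ≤ y i j).card : ℝ) / N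

/-- Minimum over objectives of the copula-space benefit ratios. -/
noncomputable def minRCop {p N : ℕ} [NeZero p] (y : Fin p → Fin N → ℝ) (s : Fin p → ℝ) : ℝ :=
  Finset.univ.inf' Finset.univ_nonempty (rCop y s)

/-- The image set `S = { (y^(1)(x_j), …, y^(p)(x_j)) : 1 ≤ j ≤ N }`. -/
def imageSet {p N : ℕ} (y : Fin p → Fin N → ℝ) : Set (Fin p → ℝ) :=
  {t | ∃ j : Fin N, ∀ i, t i = y i j}

/-- The set of copula Kalai–Smorodinsky (CKS) solutions: Pareto-nondominated
points of the image set maximizing the minimum copula-space benefit ratio over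
the Pareto-nondominated points. -/
noncomputable def CKSset {p N : ℕ} [NeZero p] (y : Fin p → Fin N → ℝ) : Set (Fin p → ℝ) :=
  {s | s ∈ imageSet y ∧ (∀ s' ∈ imageSet y, ∃ k, s k ≤ s' k) ∧
    ∀ s' ∈ imageSet y, (∀ s'' ∈ imageSet y, ∃ k, s' k ≤ s'' k) →
      minRCop y s' ≤ minRCop y s}

/-- Copula-space benefit ratios on a finite domain are invariant under strictly
increasing transformations of the objectives, and the set of CKS solutions for
the transformed objectives is exactly the componentwise image of the set of CKS
solutions for the original objectives. -/
theorem CKS_invariant_under_strictMono_transforms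
    {p N : ℕ} [NeZero p] (hN : 0 < N) (y : Fin p → Fin N → ℝ)
    (g : Fin p → ℝ → ℝ) (hg : ∀ i, StrictMono (g i)) :
    (∀ (s : Fin p → ℝ) (i : Fin p),
      rCop (fun i j => g i (y i j)) (fun k => g k (s k)) i = rCop y s i) ∧
    ((fun s : Fin p → ℝ => fun i => g i (s i)) '' CKSset y
      = CKSset (fun i j => g i (y i j))) := by
  have hr : ∀ (s : Fin p → ℝ) (i : Fin p),
      rCop (fun i j => g i (y i j)) (fun k => g k (s k)) i = rCop y s i := by
    intro s i
    unfold rCop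
    congr 2
    exact congrArg Finset.card
      (Finset.filter_congr (fun j _ => by simp [(hg i).le_iff_le]))
  refine ⟨hr, ?_⟩
  have hmin : ∀ s : Fin p → ℝ,
      minRCop (fun i j => g i (y i j)) (fun i => g i (s i)) = minRCop y s := by
    intro s
    unfold minRCop
    exact Finset.inf'_congr _ rfl (fun i _ => hr s i)
  ext t
  constructor
  · rintro ⟨s, ⟨⟨j, hj⟩, hpar, hmax⟩, rfl⟩
    refine ⟨⟨j, fun i => congrArg (g i) (hj i)⟩, ?_, ?_⟩
    · rintro t' ⟨j', hj'⟩
      obtain ⟨k, hk⟩ := hpar (fun i => y i j') ⟨j', fun i => rfl⟩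
      exact ⟨k, by rw [hj' k]; exact (hg k).le_iff_le.mpr hk⟩
    · rintro t' ⟨j', hj'⟩ hpar'
      have ht' : t' = fun i => g i (y i j') := funext hj'
      subst ht'
      rw [hmin, hmin]
      apply hmax (fun i => y i j') ⟨j', fun i => rfl⟩
      rintro s'' ⟨j'', hj''⟩
      obtain ⟨k, hk⟩ := hpar' (fun i => g i (y i j'')) ⟨j'', fun i => rfl⟩
      refine ⟨k, (hg k).le_iff_le.mp ?_⟩
      rw [hj'' k]; exact hk
  · rintro ⟨⟨j, hj⟩, hpar, hmax⟩
    refine ⟨fun i => y i j, ⟨⟨j, fun i => rfl⟩, ?_, ?_⟩, (funext hj).symm⟩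
    · rintro s' ⟨j', hj'⟩
      obtain ⟨k, hk⟩ := hpar (fun i => g i (y i j')) ⟨j', fun i => rfl⟩
      refine ⟨k, (hg k).le_iff_le.mp ?_⟩
      rw [hj' k]; rw [hj k] at hk; exact hk
    · rintro s' ⟨j', hj'⟩ hpar'
      have hs' : s' = fun i => y i j' := funext hj'
      subst hs'
      rw [← hmin, ← hmin]
      have := hmax (fun i => g i (y i j')) ⟨j', fun i => rfl⟩ ?_
      · rw [funext hj] at this; exact this
      · rintro t'' ⟨j'', hj''⟩
        obtain ⟨k, hk⟩ := hpar' (fun i => y i j'') ⟨j'', fun i => rfl⟩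
        exact ⟨k, by rw [hj'' k]; exact (hg k).le_iff_le.mpr hk⟩
end
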